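/- The assume-guarantee rule ASym is sound and complete for simulation conformance: for LPTSes L₁, L₂, P, we have L₁ ∥ L₂ ⪯ P if and only if there exists an LPTS A such that L₁ ∥ A ⪯ P and L₂ ⪯ A, where all alphabets are such that the alphabet of A equals that of L₂. -/

import Mathlib

open Finset
open scoped Classical

/-- A discrete probability distribution on a finite set `S`, with rational values. -/
structure PDist (S : Type) [Fintype S] where
  prob : S → ℚ
  nonneg : ∀ s, 0 ≤ prob s
  sum_one : ∑ s, prob s = 1

/-- The product distribution `ν₁ ⊗ ν₂`. -/
def PDist.prod {S₁ S₂ : Type} [Fintype S₁] [Fintype S₂]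
    (ν₁ : PDist S₁) (ν₂ : PDist S₂) : PDist (S₁ × S₂) where
  prob := fun p => ν₁.prob p.1 * ν₂.prob p.2
  nonneg := fun p => mul_nonneg (ν₁.nonneg _) (ν₂.nonneg _)
  sum_one := by
    rw [Fintype.sum_prod_type]
    simp_rw [← Finset.mul_sum]
    simp [ν₂.sum_one, ν₁.sum_one]

/-- The Dirac distribution on `s`. -/
noncomputable def PDist.dirac {S : Type} [Fintype S] (s : S) : PDist S where
  prob := fun t => if t = s then 1 else 0
  nonneg := by intro t; (try simp only []); split <;> norm_num
  sum_one := by simp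

/-- The lifting `μ₁ ⊑_R μ₂` of a relation `R` to distributions, via a weight function. -/
def DistLe {S₁ S₂ : Type} [Fintype S₁] [Fintype S₂]
    (R : S₁ → S₂ → Prop) (μ₁ : PDist S₁) (μ₂ : PDist S₂) : Prop :=
  ∃ w : S₁ → S₂ → ℚ,
    (∀ s₁ s₂, 0 ≤ w s₁ s₂ ∧ w s₁ s₂ ≤ 1) ∧
    (∀ s₁, μ₁.prob s₁ = ∑ s₂, w s₁ s₂) ∧
    (∀ s₂, μ₂.prob s₂ = ∑ s₁, w s₁ s₂) ∧
    (∀ s₁ s₂, 0 < w s₁ s₂ → R s₁ s₂)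

/-- A labeled probabilistic transition system over states `S`, with an explicit
alphabet `alpha ⊆ A`. -/
structure LPTS (S A : Type) [Fintype S] where
  start : S
  alpha : Set A
  trans : S → A → PDist S → Prop

/-- `R` is a strong simulation between `L₁` and `L₂`. -/
def IsStrongSim {S₁ S₂ A : Type} [Fintype S₁] [Fintype S₂]
    (L₁ : LPTS S₁ A) (L₂ : LPTS S₂ A) (R : S₁ → S₂ → Prop) : Prop :=
  ∀ s₁ s₂, R s₁ s₂ → ∀ a μ₁, L₁.trans s₁ a μ₁ →
    ∃ μ₂, L₂.trans s₂ a μ₂ ∧ DistLe R μ₁ μ₂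

/-- `L₁ ⪯ L₂`: simulation conformance. -/
def Sim {S₁ S₂ A : Type} [Fintype S₁] [Fintype S₂]
    (L₁ : LPTS S₁ A) (L₂ : LPTS S₂ A) : Prop :=
  ∃ R, IsStrongSim L₁ L₂ R ∧ R L₁.start L₂.start

/-- Parallel composition `L₁ ∥ L₂`: synchronization on shared actions via product
distributions, interleaving (with a Dirac distribution on the idle component) on
non-shared actions. -/
noncomputable def parComp {S₁ S₂ A : Type} [Fintype S₁] [Fintype S₂]
    (L₁ : LPTS S₁ A) (L₂ : LPTS S₂ A) : LPTS (S₁ × S₂) A where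
  start := (L₁.start, L₂.start)
  alpha := L₁.alpha ∪ L₂.alpha
  trans := fun p a μ =>
    (∃ μ₁ μ₂, L₁.trans p.1 a μ₁ ∧ L₂.trans p.2 a μ₂ ∧ μ = μ₁.prod μ₂) ∨
    (∃ μ₁, L₁.trans p.1 a μ₁ ∧ a ∉ L₂.alpha ∧ μ = μ₁.prod (PDist.dirac p.2)) ∨
    (∃ μ₂, a ∉ L₁.alpha ∧ L₂.trans p.2 a μ₂ ∧ μ = (PDist.dirac p.1).prod μ₂)

lemma DistLe.trans' {S₁ S₂ S₃ : Type} [Fintype S₁] [Fintype S₂] [Fintype S₃]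
    {R₁ : S₁ → S₂ → Prop} {R₂ : S₂ → S₃ → Prop}
    {μ₁ : PDist S₁} {μ₂ : PDist S₂} {μ₃ : PDist S₃}
    (h₁ : DistLe R₁ μ₁ μ₂) (h₂ : DistLe R₂ μ₂ μ₃) :
    DistLe (fun s₁ s₃ => ∃ s₂, R₁ s₁ s₂ ∧ R₂ s₂ s₃) μ₁ μ₃ := by
  obtain ⟨w₁, hb₁, hl₁, hr₁, hp₁⟩ := h₁
  obtain ⟨w₂, hb₂, hl₂, hr₂, hp₂⟩ := h₂
  set w : S₁ → S₃ → ℚ := fun s₁ s₃ =>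
    ∑ s₂, if μ₂.prob s₂ = 0 then 0 else w₁ s₁ s₂ * w₂ s₂ s₃ / μ₂.prob s₂ with hwdef
  have hzero1 : ∀ s₂, μ₂.prob s₂ = 0 → ∀ s₁, w₁ s₁ s₂ = 0 := fun s₂ h s₁ =>
    (Finset.sum_eq_zero_iff_of_nonneg
      (fun t _ => (hb₁ t s₂).1)).1 ((hr₁ s₂).symm.trans h) s₁ (Finset.mem_univ s₁)
  have hw1le : ∀ s₁ s₂, w₁ s₁ s₂ ≤ μ₂.prob s₂ := by
    intro s₁ s₂
    rw [hr₁ s₂]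
    exact Finset.single_le_sum (fun t _ => (hb₁ t s₂).1) (Finset.mem_univ s₁)
  have htermnn : ∀ s₁ s₂ s₃, 0 ≤ (if μ₂.prob s₂ = 0 then 0 else w₁ s₁ s₂ * w₂ s₂ s₃ / μ₂.prob s₂) := by
    intro s₁ s₂ s₃
    split
    · exact le_refl 0
    · exact div_nonneg (mul_nonneg (hb₁ s₁ s₂).1 (hb₂ s₂ s₃).1) (μ₂.nonneg s₂)
  have htermle : ∀ s₁ s₂ s₃, (if μ₂.prob s₂ = 0 then 0 else w₁ s₁ s₂ * w₂ s₂ s₃ / μ₂.prob s₂) ≤ w₂ s₂ s₃ := by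
    intro s₁ s₂ s₃
    split
    · exact (hb₂ s₂ s₃).1
    · rename_i h
      have hpos : 0 < μ₂.prob s₂ := lt_of_le_of_ne (μ₂.nonneg s₂) (Ne.symm h)
      rw [div_le_iff₀ hpos, mul_comm (w₁ s₁ s₂)]
      exact mul_le_mul_of_nonneg_left (hw1le s₁ s₂) (hb₂ s₂ s₃).1
  refine ⟨w, ?_, ?_, ?_, ?_⟩
  · intro s₁ s₃
    constructor
    · exact Finset.sum_nonneg fun s₂ _ => htermnn s₁ s₂ s₃
    · calc w s₁ s₃ ≤ ∑ s₂, w₂ s₂ s₃ := Finset.sum_le_sum fun s₂ _ => htermle s₁ s₂ s₃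
        _ = μ₃.prob s₃ := (hr₂ s₃).symm
        _ ≤ 1 := by
            calc μ₃.prob s₃ ≤ ∑ t, μ₃.prob t :=
                  Finset.single_le_sum (fun t _ => μ₃.nonneg t) (Finset.mem_univ s₃)
              _ = 1 := μ₃.sum_one
  · intro s₁
    rw [hwdef]
    simp only []
    rw [Finset.sum_comm]
    have : ∀ s₂, (∑ s₃, if μ₂.prob s₂ = 0 then 0 else w₁ s₁ s₂ * w₂ s₂ s₃ / μ₂.prob s₂)
        = w₁ s₁ s₂ := by
      intro s₂
      by_cases h : μ₂.prob s₂ = 0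
      · simp [h, hzero1 s₂ h s₁]
      · simp only [h, if_false]
        rw [← Finset.sum_div, ← Finset.mul_sum, ← hl₂ s₂, mul_div_assoc,
          div_self h, mul_one]
    rw [Finset.sum_congr rfl (fun s₂ _ => this s₂)]
    exact hl₁ s₁
  · intro s₃
    rw [hwdef]
    simp only []
    rw [Finset.sum_comm]
    have : ∀ s₂, (∑ s₁, if μ₂.prob s₂ = 0 then 0 else w₁ s₁ s₂ * w₂ s₂ s₃ / μ₂.prob s₂)
        = w₂ s₂ s₃ := by
      intro s₂
      by_cases h : μ₂.prob s₂ = 0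
      · have := (Finset.sum_eq_zero_iff_of_nonneg
          (fun t (_ : t ∈ Finset.univ) => (hb₂ s₂ t).1)).1 ((hl₂ s₂).symm.trans h) s₃
          (Finset.mem_univ s₃)
        simp [h, this]
      · simp only [h, if_false]
        rw [← Finset.sum_div, ← Finset.sum_mul, ← hr₁ s₂, mul_comm, mul_div_assoc,
          div_self h, mul_one]
    rw [Finset.sum_congr rfl (fun s₂ _ => this s₂)]
    exact hr₂ s₃
  · intro s₁ s₃ hpos
    have : ∃ s₂ ∈ Finset.univ, 0 < (if μ₂.prob s₂ = 0 then 0 else w₁ s₁ s₂ * w₂ s₂ s₃ / μ₂.prob s₂) := by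
      by_contra hc
      push_neg at hc
      have : w s₁ s₃ ≤ 0 := Finset.sum_nonpos fun s₂ h => hc s₂ h
      exact absurd hpos (not_lt.2 this)
    obtain ⟨s₂, _, ht⟩ := this
    by_cases h : μ₂.prob s₂ = 0
    · rw [if_pos h] at ht; exact absurd ht (lt_irrefl 0)
    · rw [if_neg h] at ht
      have hpos2 : 0 < μ₂.prob s₂ := lt_of_le_of_ne (μ₂.nonneg s₂) (Ne.symm h)
      have hmul : 0 < w₁ s₁ s₂ * w₂ s₂ s₃ := by
        have := (div_pos_iff).1 ht
        rcases this with ⟨h1, _⟩ | ⟨_, h2⟩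
        · exact h1
        · exact absurd hpos2 (not_lt.2 (le_of_lt h2))
      have h1 : 0 < w₁ s₁ s₂ := by
        rcases lt_or_eq_of_le (hb₁ s₁ s₂).1 with h' | h'
        · exact h'
        · rw [← h', zero_mul] at hmul; exact absurd hmul (lt_irrefl 0)
      have h2 : 0 < w₂ s₂ s₃ := by
        rcases lt_or_eq_of_le (hb₂ s₂ s₃).1 with h' | h'
        · exact h'
        · rw [← h', mul_zero] at hmul; exact absurd hmul (lt_irrefl 0)
      exact ⟨s₂, hp₁ _ _ h1, hp₂ _ _ h2⟩

lemma PDist.prob_le_one {S : Type} [Fintype S] (μ : PDist S) (s : S) : μ.prob s ≤ 1 :=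
  (Finset.single_le_sum (fun t _ => μ.nonneg t) (Finset.mem_univ s)).trans (le_of_eq μ.sum_one)

lemma DistLe.mono {S₁ S₂ : Type} [Fintype S₁] [Fintype S₂]
    {R R' : S₁ → S₂ → Prop} {μ₁ : PDist S₁} {μ₂ : PDist S₂}
    (h : ∀ s₁ s₂, R s₁ s₂ → R' s₁ s₂) (hd : DistLe R μ₁ μ₂) : DistLe R' μ₁ μ₂ := by
  obtain ⟨w, hb, h1, h2, hr⟩ := hd
  exact ⟨w, hb, h1, h2, fun s₁ s₂ hw => h _ _ (hr s₁ s₂ hw)⟩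

lemma DistLe.refl' {S : Type} [Fintype S] (μ : PDist S) : DistLe Eq μ μ := by
  refine ⟨fun s t => if t = s then μ.prob s else 0, ?_, ?_, ?_, ?_⟩
  · intro s t; dsimp only; constructor
    · split <;> simp [μ.nonneg]
    · split
      · exact μ.prob_le_one s
      · norm_num
  · intro s; simp
  · intro t
    rw [Finset.sum_ite_eq Finset.univ t (fun s => μ.prob s)]
    simp
  · intro s t h
    dsimp only at h
    by_contra hne
    rw [if_neg (fun h' => hne h'.symm)] at h
    exact lt_irrefl 0 h

lemma DistLe.dirac' {S₁ S₂ : Type} [Fintype S₁] [Fintype S₂]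
    {R : S₁ → S₂ → Prop} {s : S₁} {t : S₂} (h : R s t) :
    DistLe R (PDist.dirac s) (PDist.dirac t) := by
  refine ⟨fun a b => if a = s ∧ b = t then 1 else 0, ?_, ?_, ?_, ?_⟩
  · intro a b; dsimp only; constructor <;> (split <;> norm_num)
  · intro a
    show (if a = s then (1:ℚ) else 0) = _
    by_cases ha : a = s
    · subst ha; simp
    · simp [ha]
  · intro b
    show (if b = t then (1:ℚ) else 0) = _
    by_cases hb : b = t
    · subst hb; simp
    · simp [hb]
  · intro a b hw
    dsimp only at hw
    by_cases hab : a = s ∧ b = t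
    · obtain ⟨ha, hb⟩ := hab; subst ha; subst hb; exact h
    · rw [if_neg hab] at hw; exact absurd hw (lt_irrefl 0)

lemma DistLe.prod' {S₁ S₂ T₁ T₂ : Type} [Fintype S₁] [Fintype S₂] [Fintype T₁] [Fintype T₂]
    {R₁ : S₁ → T₁ → Prop} {R₂ : S₂ → T₂ → Prop}
    {μ₁ : PDist S₁} {ν₁ : PDist T₁} {μ₂ : PDist S₂} {ν₂ : PDist T₂}
    (h₁ : DistLe R₁ μ₁ ν₁) (h₂ : DistLe R₂ μ₂ ν₂) :
    DistLe (fun p q => R₁ p.1 q.1 ∧ R₂ p.2 q.2) (μ₁.prod μ₂) (ν₁.prod ν₂) := by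
  obtain ⟨w₁, hb₁, hl₁, hr₁, hp₁⟩ := h₁
  obtain ⟨w₂, hb₂, hl₂, hr₂, hp₂⟩ := h₂
  refine ⟨fun p q => w₁ p.1 q.1 * w₂ p.2 q.2, ?_, ?_, ?_, ?_⟩
  · intro p q
    refine ⟨mul_nonneg (hb₁ p.1 q.1).1 (hb₂ p.2 q.2).1, ?_⟩
    exact mul_le_one₀ (hb₁ p.1 q.1).2 (hb₂ p.2 q.2).1 (hb₂ p.2 q.2).2
  · intro p
    show μ₁.prob p.1 * μ₂.prob p.2 = _
    rw [Fintype.sum_prod_type]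
    simp_rw [← Finset.mul_sum, ← Finset.sum_mul, ← hl₁, ← hl₂]
  · intro q
    show ν₁.prob q.1 * ν₂.prob q.2 = _
    rw [Fintype.sum_prod_type]
    simp_rw [← Finset.mul_sum, ← Finset.sum_mul, ← hr₁, ← hr₂]
  · intro p q hw
    dsimp only at hw
    have h1 : 0 < w₁ p.1 q.1 := by
      rcases lt_or_eq_of_le (hb₁ p.1 q.1).1 with h | h
      · exact h
      · rw [← h, zero_mul] at hw; exact absurd hw (lt_irrefl 0)
    have h2 : 0 < w₂ p.2 q.2 := by
      rcases lt_or_eq_of_le (hb₂ p.2 q.2).1 with h | h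
      · exact h
      · rw [← h, mul_zero] at hw; exact absurd hw (lt_irrefl 0)
    exact ⟨hp₁ _ _ h1, hp₂ _ _ h2⟩

lemma Sim.refl' {S A : Type} [Fintype S] (L : LPTS S A) : Sim L L := by
  refine ⟨Eq, ?_, rfl⟩
  intro s₁ s₂ h a μ₁ ht
  subst h
  exact ⟨μ₁, ht, DistLe.refl' μ₁⟩

lemma Sim.trans' {S₁ S₂ S₃ A : Type} [Fintype S₁] [Fintype S₂] [Fintype S₃]
    {L₁ : LPTS S₁ A} {L₂ : LPTS S₂ A} {L₃ : LPTS S₃ A}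
    (h₁ : Sim L₁ L₂) (h₂ : Sim L₂ L₃) : Sim L₁ L₃ := by
  obtain ⟨R₁, hs₁, hst₁⟩ := h₁
  obtain ⟨R₂, hs₂, hst₂⟩ := h₂
  refine ⟨fun s₁ s₃ => ∃ s₂, R₁ s₁ s₂ ∧ R₂ s₂ s₃, ?_, ⟨L₂.start, hst₁, hst₂⟩⟩
  intro s₁ s₃ ⟨s₂, hr₁, hr₂⟩ a μ₁ ht
  obtain ⟨μ₂, ht₂, hd₁⟩ := hs₁ s₁ s₂ hr₁ a μ₁ ht
  obtain ⟨μ₃, ht₃, hd₂⟩ := hs₂ s₂ s₃ hr₂ a μ₂ ht₂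
  exact ⟨μ₃, ht₃, DistLe.trans' hd₁ hd₂⟩

lemma Sim.par_right {S₁ S₂ SA A : Type} [Fintype S₁] [Fintype S₂] [Fintype SA]
    (L₁ : LPTS S₁ A) {L₂ : LPTS S₂ A} {As : LPTS SA A}
    (halpha : As.alpha = L₂.alpha) (h : Sim L₂ As) :
    Sim (parComp L₁ L₂) (parComp L₁ As) := by
  obtain ⟨R₂, hs₂, hst₂⟩ := h
  refine ⟨fun p q => p.1 = q.1 ∧ R₂ p.2 q.2, ?_, ⟨rfl, hst₂⟩⟩
  rintro ⟨s₁, s₂⟩ ⟨t₁, t₂⟩ ⟨heq, hr⟩ a μ ht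
  dsimp only at heq
  subst heq
  rcases ht with ⟨μ₁, μ₂, ht₁, ht₂, rfl⟩ | ⟨μ₁, ht₁, hna, rfl⟩ | ⟨μ₂, hna, ht₂, rfl⟩
  · obtain ⟨ν, htν, hd⟩ := hs₂ s₂ t₂ hr a μ₂ ht₂
    refine ⟨μ₁.prod ν, Or.inl ⟨μ₁, ν, ht₁, htν, rfl⟩, ?_⟩
    exact DistLe.prod' (DistLe.refl' μ₁) hd
  · refine ⟨μ₁.prod (PDist.dirac t₂), Or.inr (Or.inl ⟨μ₁, ht₁, ?_, rfl⟩), ?_⟩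
    · rw [halpha]; exact hna
    · exact DistLe.prod' (DistLe.refl' μ₁) (DistLe.dirac' hr)
  · obtain ⟨ν, htν, hd⟩ := hs₂ s₂ t₂ hr a μ₂ ht₂
    refine ⟨(PDist.dirac s₁).prod ν, Or.inr (Or.inr ⟨ν, hna, htν, rfl⟩), ?_⟩
    exact DistLe.prod' (DistLe.refl' (PDist.dirac s₁)) hd

/-- Soundness and completeness of the assume-guarantee rule ASym:
`L₁ ∥ L₂ ⪯ P` iff there is an assumption `A` with the alphabet of `L₂` such that
`L₁ ∥ A ⪯ P` and `L₂ ⪯ A`. -/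
theorem asym_sound_complete {S₁ S₂ SP Act : Type}
    [Fintype S₁] [Fintype S₂] [Fintype SP]
    (L₁ : LPTS S₁ Act) (L₂ : LPTS S₂ Act) (P : LPTS SP Act) :
    Sim (parComp L₁ L₂) P ↔
      ∃ (SA : Type) (_ : Fintype SA) (As : LPTS SA Act),
        As.alpha = L₂.alpha ∧ Sim (parComp L₁ As) P ∧ Sim L₂ As := by
  constructor
  · intro h
    exact ⟨S₂, inferInstance, L₂, rfl, h, Sim.refl' L₂⟩
  · rintro ⟨SA, _, As, halpha, hPA, hL2A⟩
    exact Sim.trans' (Sim.par_right L₁ halpha hL2A) hPA
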